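/- arXiv:1205.5259 — 2 statements merged into one kernel-verified Lean document; each statement's English description precedes it below -/
import Mathlib

section
/- One has the operator inequality (A + B) E (A + B)* ≤ C·D with C := (1 + (1 + 2‖D^{-1/2} V D^{-1/2}‖)^{1/2})². -/
/- Context: `H` a complex Hilbert space, `D` bounded self-adjoint with `D ≥ δ·1`, `δ > 0`,
`V` a positive trace-class operator, `E := (D^{1/2}(D+2V)D^{1/2})^{1/2}`,
`A := D^{1/2}E^{-1/2}`, `B := D^{-1/2}E^{1/2}`.
Statement 12: `(A + B) E (A + B)* ≤ C·D` with `C := (1 + (1 + 2‖D^{-1/2}VD^{-1/2}‖)^{1/2})²`. -/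

open scoped InnerProductSpace ENNReal

set_option synthInstance.maxHeartbeats 1000000
set_option maxHeartbeats 1000000

universe u

variable {H : Type u} [NormedAddCommGroup H] [InnerProductSpace ℂ H] [CompleteSpace H]

/-- `|T| := (T*T)^{1/2}` via the continuous functional calculus. -/
noncomputable def opAbs (T : H →L[ℂ] H) : H →L[ℂ] H :=
  CFC.sqrt (ContinuousLinearMap.adjoint T * T)

/-- `T` is Hilbert–Schmidt if `∑_i ‖T e_i‖² < ∞` for some orthonormal (Hilbert) basis. -/
def IsHilbertSchmidt (T : H →L[ℂ] H) : Prop :=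
  ∃ (ι : Type u) (b : HilbertBasis ι ℂ H), Summable fun i => ‖T (b i)‖ ^ 2

/-- `T` is trace class if `∑_i ⟨e_i, (T*T)^{1/2} e_i⟩ < ∞` for some orthonormal basis. -/
def IsTraceClass (T : H →L[ℂ] H) : Prop :=
  ∃ (ι : Type u) (b : HilbertBasis ι ℂ H),
    Summable fun i => (⟪b i, opAbs T (b i)⟫_ℂ).re

/-- The squared Hilbert–Schmidt norm `∑_i ‖T e_i‖²`, valued in `ℝ≥0∞`
(basis independent). -/
noncomputable def eHSsq {ι : Type u} (b : HilbertBasis ι ℂ H) (T : H →L[ℂ] H) : ℝ≥0∞ :=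
  ∑' i, (‖T (b i)‖₊ : ℝ≥0∞) ^ 2

/-- The trace norm `‖T‖₁ = ∑_i ⟨e_i, |T| e_i⟩ = ∑_i ‖ |T|^{1/2} e_i ‖²`, valued in `ℝ≥0∞`
(basis independent). -/
noncomputable def eTraceNorm {ι : Type u} (b : HilbertBasis ι ℂ H) (T : H →L[ℂ] H) : ℝ≥0∞ :=
  ∑' i, (‖CFC.sqrt (opAbs T) (b i)‖₊ : ℝ≥0∞) ^ 2

/-- `E := (D^{1/2}(D+2V)D^{1/2})^{1/2}`. -/
noncomputable def bogE (D V : H →L[ℂ] H) : H →L[ℂ] H :=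
  CFC.sqrt (CFC.sqrt D * (D + (2 : ℝ) • V) * CFC.sqrt D)

/-- `A := D^{1/2} E^{-1/2}`. -/
noncomputable def bogA (D V : H →L[ℂ] H) : H →L[ℂ] H :=
  CFC.sqrt D * Ring.inverse (CFC.sqrt (bogE D V))

/-- `B := D^{-1/2} E^{1/2}`. -/
noncomputable def bogB (D V : H →L[ℂ] H) : H →L[ℂ] H :=
  Ring.inverse (CFC.sqrt D) * CFC.sqrt (bogE D V)

section Aux

lemma aux_isUnit_sq {a : H →L[ℂ] H} (h : IsUnit (a * a)) : IsUnit a := by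
  obtain ⟨u, hu⟩ := h
  have hc : Commute (u : H →L[ℂ] H) a := by
    rw [hu]; exact ((Commute.refl a).mul_left (Commute.refl a))
  have hinv : Commute (↑u⁻¹ : H →L[ℂ] H) a := hc.units_inv_left
  refine ⟨⟨a, ↑u⁻¹ * a, ?_, ?_⟩, rfl⟩
  · rw [← mul_assoc, ← hinv.eq, mul_assoc, ← hu, u.inv_mul]
  · rw [mul_assoc, ← hu, u.inv_mul]

lemma aux_smul_le_smul {r : ℝ} (hr : 0 ≤ r) {a b : H →L[ℂ] H} (hab : a ≤ b) :
    r • a ≤ r • b := by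
  rw [← sub_nonneg, ← smul_sub]
  have h := star_left_conjugate_nonneg (sub_nonneg.2 hab) (Real.sqrt r • (1 : H →L[ℂ] H))
  rwa [star_smul, star_trivial, star_one, smul_mul_assoc, one_mul, mul_smul_comm, mul_one,
    smul_smul, Real.mul_self_sqrt hr] at h

lemma aux_smul_nonneg {r : ℝ} (hr : 0 ≤ r) {a : H →L[ℂ] H} (ha : 0 ≤ a) : 0 ≤ r • a := by
  simpa using aux_smul_le_smul hr ha

lemma aux_le_norm_smul_one {W : H →L[ℂ] H} (hW : 0 ≤ W) : W ≤ ‖W‖ • (1 : H →L[ℂ] H) := by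
  have := IsSelfAdjoint.le_algebraMap_norm_self (a := W) (IsSelfAdjoint.of_nonneg hW)
  rwa [Algebra.algebraMap_eq_smul_one] at this

/-- `(x * t⁻¹) * (t * t) * (t⁻¹ * y) = x * y`. -/
lemma aux_conj {t : H →L[ℂ] H} (ht : IsUnit t) (x y : H →L[ℂ] H) :
    (x * Ring.inverse t) * (t * t) * (Ring.inverse t * y) = x * y := by
  have h1 : Ring.inverse t * t = 1 := Ring.inverse_mul_cancel t ht
  have h2 : t * Ring.inverse t = 1 := Ring.mul_inverse_cancel t ht
  calc (x * Ring.inverse t) * (t * t) * (Ring.inverse t * y)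
      = x * ((Ring.inverse t * t) * ((t * Ring.inverse t) * y)) := by
        simp only [mul_assoc]
    _ = x * y := by rw [h1, h2, one_mul, one_mul]

/-- `t⁻¹ * (t * x * t) * t⁻¹ = x`. -/
lemma aux_sand {t : H →L[ℂ] H} (ht : IsUnit t) (x : H →L[ℂ] H) :
    Ring.inverse t * (t * x * t) * Ring.inverse t = x := by
  have h1 : Ring.inverse t * t = 1 := Ring.inverse_mul_cancel t ht
  have h2 : t * Ring.inverse t = 1 := Ring.mul_inverse_cancel t ht
  calc Ring.inverse t * (t * x * t) * Ring.inverse t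
      = (Ring.inverse t * t) * (x * (t * Ring.inverse t)) := by simp only [mul_assoc]
    _ = x := by rw [h1, h2, one_mul, mul_one]

/-- `t * (t⁻¹ * x * t⁻¹) * t = x`. -/
lemma aux_sand' {t : H →L[ℂ] H} (ht : IsUnit t) (x : H →L[ℂ] H) :
    t * (Ring.inverse t * x * Ring.inverse t) * t = x := by
  have h1 : Ring.inverse t * t = 1 := Ring.inverse_mul_cancel t ht
  have h2 : t * Ring.inverse t = 1 := Ring.mul_inverse_cancel t ht
  calc t * (Ring.inverse t * x * Ring.inverse t) * t
      = (t * Ring.inverse t) * (x * (Ring.inverse t * t)) := by simp only [mul_assoc]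
    _ = x := by rw [h1, h2, one_mul, mul_one]

end Aux

theorem ApB_E_ApBstar_le_CD
    (δ : ℝ) (hδ : 0 < δ) (D V : H →L[ℂ] H)
    (hD : IsSelfAdjoint D) (hDδ : δ • (1 : H →L[ℂ] H) ≤ D)
    (hV : 0 ≤ V) (hVtc : IsTraceClass V) :
    (bogA D V + bogB D V) * bogE D V * ContinuousLinearMap.adjoint (bogA D V + bogB D V)
      ≤ ((1 + Real.sqrt (1 + 2 * ‖Ring.inverse (CFC.sqrt D) * V * Ring.inverse (CFC.sqrt D)‖)) ^ 2)
          • D := by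
  rw [← ContinuousLinearMap.star_eq_adjoint]
  set S := CFC.sqrt D with hSdef
  set iS := Ring.inverse S with hiSdef
  set W := iS * V * iS with hWdef
  set s := Real.sqrt (1 + 2 * ‖W‖) with hsdef
  set F := bogE D V with hFdef
  set T := CFC.sqrt F with hTdef
  set iT := Ring.inverse T with hiTdef
  set A := bogA D V with hAdef
  set B := bogB D V with hBdef
  -- basic positivity
  have h10 : (0 : H →L[ℂ] H) ≤ 1 := by simpa using star_mul_self_nonneg (1 : H →L[ℂ] H)
  have hδ1 : (0 : H →L[ℂ] H) ≤ δ • 1 := aux_smul_nonneg hδ.le h10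
  have hD0 : (0 : H →L[ℂ] H) ≤ D := hδ1.trans hDδ
  have h2V : (0 : H →L[ℂ] H) ≤ (2 : ℝ) • V := aux_smul_nonneg (by norm_num) hV
  have hDV : (0 : H →L[ℂ] H) ≤ D + (2 : ℝ) • V := le_trans hD0 (le_add_of_nonneg_right h2V)
  -- units
  have hδu : IsUnit (δ • (1 : H →L[ℂ] H)) := by
    refine ⟨⟨δ • (1 : H →L[ℂ] H), δ⁻¹ • (1 : H →L[ℂ] H), ?_, ?_⟩, rfl⟩
    · rw [smul_mul_smul_comm, mul_one, mul_inv_cancel₀ hδ.ne', one_smul]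
    · rw [smul_mul_smul_comm, mul_one, inv_mul_cancel₀ hδ.ne', one_smul]
  have hDu : IsUnit D := CStarAlgebra.isUnit_of_le _ hDδ (hδu.isStrictlyPositive hδ1)
  -- S facts
  have hS0 : (0 : H →L[ℂ] H) ≤ S := by rw [hSdef]; exact CFC.sqrt_nonneg _
  have hSsa : IsSelfAdjoint S := .of_nonneg hS0
  have hSS : S * S = D := CFC.sqrt_mul_sqrt_self D hD0
  have hSu : IsUnit S := aux_isUnit_sq (hSS.symm ▸ hDu)
  have hiS1 : iS * S = 1 := Ring.inverse_mul_cancel S hSu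
  have hSi1 : S * iS = 1 := Ring.mul_inverse_cancel S hSu
  have hiSsa : star iS = iS := by
    rw [hiSdef, ← Ring.inverse_star, hSsa.star_eq]
  -- M := S (D + 2V) S
  have hM0 : (0 : H →L[ℂ] H) ≤ S * (D + (2 : ℝ) • V) * S := by
    have := star_left_conjugate_nonneg hDV S
    rwa [hSsa.star_eq] at this
  have hDD : D * D = S * D * S := by
    have : S * D * S = D * D := by rw [← hSS]; simp only [mul_assoc]
    exact this.symm
  have hDD0 : (0 : H →L[ℂ] H) ≤ D * D := by
    have := star_mul_self_nonneg D
    rwa [hD.star_eq] at this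
  have hDDle : D * D ≤ S * (D + (2 : ℝ) • V) * S := by
    rw [hDD]
    have := star_left_conjugate_le_conjugate (le_add_of_nonneg_right h2V : D ≤ D + (2:ℝ) • V) S
    rwa [hSsa.star_eq] at this
  have hMu : IsUnit (S * (D + (2 : ℝ) • V) * S) :=
    CStarAlgebra.isUnit_of_le _ hDDle ((hDu.mul hDu).isStrictlyPositive hDD0)
  -- F facts
  have hF0 : (0 : H →L[ℂ] H) ≤ F := by rw [hFdef, bogE, ← hSdef]; exact CFC.sqrt_nonneg _
  have hFsa : IsSelfAdjoint F := .of_nonneg hF0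
  have hFF : F * F = S * (D + (2 : ℝ) • V) * S := by
    rw [hFdef, bogE, ← hSdef]
    exact CFC.sqrt_mul_sqrt_self _ hM0
  have hFu : IsUnit F := aux_isUnit_sq (hFF.symm ▸ hMu)
  -- T facts
  have hT0 : (0 : H →L[ℂ] H) ≤ T := by rw [hTdef]; exact CFC.sqrt_nonneg _
  have hTsa : IsSelfAdjoint T := .of_nonneg hT0
  have hTT : T * T = F := CFC.sqrt_mul_sqrt_self F hF0
  have hTu : IsUnit T := aux_isUnit_sq (hTT.symm ▸ hFu)
  have hiTsa : star iT = iT := by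
    rw [hiTdef, ← Ring.inverse_star, hTsa.star_eq]
  -- A, B and stars
  have hA : A = S * iT := by rw [hAdef, bogA]
  have hB : B = iS * T := by rw [hBdef, bogB]
  have hAstar : star A = iT * S := by rw [hA, star_mul, hiTsa, hSsa.star_eq]
  have hBstar : star B = T * iS := by rw [hB, star_mul, hiSsa, hTsa.star_eq]
  -- the three products
  have hP : A * F * star A = D := by
    rw [hAstar, hA, ← hTT, aux_conj hTu, hSS]
  have hQ : B * F * star B = D + (2 : ℝ) • V := by
    have hTFT : T * F * T = S * (D + (2 : ℝ) • V) * S := by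
      rw [← hTT]
      calc T * (T * T) * T = (T * T) * (T * T) := by simp only [mul_assoc]
        _ = S * (D + (2 : ℝ) • V) * S := by rw [hTT, hFF]
    rw [hBstar, hB]
    calc (iS * T) * F * (T * iS) = iS * (T * F * T) * iS := by simp only [mul_assoc]
      _ = iS * (S * (D + (2 : ℝ) • V) * S) * iS := by rw [hTFT]
      _ = D + (2 : ℝ) • V := aux_sand hSu _
  -- scalar s
  have hWnn : (0 : ℝ) ≤ ‖W‖ := norm_nonneg _
  have hs1 : (1 : ℝ) ≤ s := by
    have h := Real.sqrt_le_sqrt (show (1 : ℝ) ≤ 1 + 2 * ‖W‖ by linarith)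
    rwa [Real.sqrt_one] at h
  have hs0 : (0 : ℝ) < s := lt_of_lt_of_le one_pos hs1
  have hs2 : s ^ 2 = 1 + 2 * ‖W‖ := Real.sq_sqrt (by linarith)
  -- cross-term inequality
  have hcross0 : (0 : H →L[ℂ] H) ≤ (s • A - B) * F * star (s • A - B) :=
    star_right_conjugate_nonneg hF0 _
  have hexp : (s • A - B) * F * star (s • A - B)
      = s ^ 2 • (A * F * star A) - s • (A * F * star B) - s • (B * F * star A)
        + B * F * star B := by
    rw [star_sub, star_smul, star_trivial]
    simp only [sub_mul, mul_sub, smul_mul_assoc, mul_smul_comm]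
    module
  have hXle : s • (A * F * star B + B * F * star A)
      ≤ s ^ 2 • (A * F * star A) + B * F * star B := by
    rw [← sub_nonneg]
    rw [hexp] at hcross0
    convert hcross0 using 1
    rw [smul_add]
    module
  -- V ≤ ‖W‖ • D
  have hW0 : (0 : H →L[ℂ] H) ≤ W := by
    have := star_left_conjugate_nonneg hV iS
    rwa [hiSsa] at this
  have hVW : V = S * W * S := by rw [hWdef, aux_sand' hSu]
  have hVle : V ≤ ‖W‖ • D := by
    have h1 := star_left_conjugate_le_conjugate (aux_le_norm_smul_one hW0) S
    rw [hSsa.star_eq] at h1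
    calc V = S * W * S := hVW
      _ ≤ S * (‖W‖ • (1 : H →L[ℂ] H)) * S := h1
      _ = ‖W‖ • D := by
          rw [mul_smul_comm, mul_one, smul_mul_assoc, hSS]
  have hQle : D + (2 : ℝ) • V ≤ s ^ 2 • D := by
    have h2 : (2 : ℝ) • V ≤ (2 * ‖W‖) • D := by
      have := aux_smul_le_smul (by norm_num : (0:ℝ) ≤ 2) hVle
      rwa [smul_smul] at this
    calc D + (2 : ℝ) • V ≤ D + (2 * ‖W‖) • D := add_le_add_right h2 D
      _ = s ^ 2 • D := by rw [hs2, add_smul, one_smul]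
  -- combine
  have hXle2 : A * F * star B + B * F * star A ≤ s • D + s • D := by
    have h1 := aux_smul_le_smul (inv_nonneg.2 hs0.le) hXle
    rw [smul_smul, inv_mul_cancel₀ hs0.ne', one_smul, smul_add, smul_smul] at h1
    have e1 : s⁻¹ * s ^ 2 = s := by field_simp
    rw [e1, hP] at h1
    refine h1.trans (add_le_add_right ?_ _)
    calc s⁻¹ • (B * F * star B) ≤ s⁻¹ • (s ^ 2 • D) := by
          exact aux_smul_le_smul (inv_nonneg.2 hs0.le) (hQ ▸ hQle)
      _ = s • D := by rw [smul_smul, e1]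
  have hTot : (A + B) * F * star (A + B)
      = A * F * star A + (A * F * star B + B * F * star A) + B * F * star B := by
    rw [star_add]
    simp only [add_mul, mul_add]
    abel
  calc (A + B) * F * star (A + B)
      = D + (A * F * star B + B * F * star A) + (D + (2 : ℝ) • V) := by
        rw [hTot, hP, hQ]
    _ ≤ D + (s • D + s • D) + s ^ 2 • D := by
        exact add_le_add (add_le_add_right hXle2 D) hQle
    _ = ((1 + s) ^ 2) • D := by
        rw [show ((1 + s) ^ 2 : ℝ) = 1 + (s + s) + s ^ 2 by ring,
          add_smul, add_smul, one_smul, add_smul]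
end

section
/- On the Hilbert space H ⊕ H, consider the block operators M_BdG := [[D+V, V],[−V, −(D+V)]], S := [[A, 0],[0, B]], and T := (1/√2)[[1, i·1],[1, −i·1]] (2×2 blocks of bounded operators on H, with 1 the identity of H). Then G := T S^{-1} T* is bounded with bounded inverse, and G · M_BdG · G^{-1} = [[E, 0],[0, −E]]. In particular, the spectrum of M_BdG equals σ(E) ∪ (−σ(E)). (This makes precise the Bogoliubov–de Gennes eigenvalue problem: the positive frequencies ω solving (D+V)u + Vy = ωu, −Vu − (D+V)y = ωy are exactly the points of σ(E).) -/
/- Context: `H` a complex Hilbert space, `D` bounded self-adjoint with `D ≥ δ·1`, `δ > 0`,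
`V` a positive trace-class operator, `E := (D^{1/2}(D+2V)D^{1/2})^{1/2}`,
`A := D^{1/2}E^{-1/2}`, `B := D^{-1/2}E^{1/2}`.
Statement 16: on `H ⊕ H`, with `M_BdG := [[D+V, V],[−V, −(D+V)]]`, `S := [[A,0],[0,B]]`,
`T := (1/√2)[[1, i],[1, −i]]`, the operator `G := T S⁻¹ T*` is bounded with bounded inverse,
`G M_BdG G⁻¹ = [[E,0],[0,−E]]`, and `σ(M_BdG) = σ(E) ∪ (−σ(E))`. -/

open scoped InnerProductSpace ENNReal

set_option synthInstance.maxHeartbeats 1000000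
set_option maxHeartbeats 1000000

universe u

variable {H : Type u} [NormedAddCommGroup H] [InnerProductSpace ℂ H] [CompleteSpace H]

/-- The 2×2 block operator `[[P, Q],[R, S]]` on `H ⊕ H` (the `L²` direct sum `WithLp 2 (H × H)`). -/
noncomputable def blk (P Q R S : H →L[ℂ] H) :
    WithLp 2 (H × H) →L[ℂ] WithLp 2 (H × H) :=
  ((WithLp.prodContinuousLinearEquiv 2 ℂ H H).symm.toContinuousLinearMap) ∘L
    (((P ∘L ContinuousLinearMap.fst ℂ H H) + (Q ∘L ContinuousLinearMap.snd ℂ H H)).prod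
      ((R ∘L ContinuousLinearMap.fst ℂ H H) + (S ∘L ContinuousLinearMap.snd ℂ H H))) ∘L
    (WithLp.prodContinuousLinearEquiv 2 ℂ H H).toContinuousLinearMap

/-- The Bogoliubov–de Gennes block operator `[[D+V, V],[−V, −(D+V)]]`. -/
noncomputable def MBdG (D V : H →L[ℂ] H) : WithLp 2 (H × H) →L[ℂ] WithLp 2 (H × H) :=
  blk (D + V) V (-V) (-(D + V))

/-- `S := [[A, 0],[0, B]]`. -/
noncomputable def Sblk (D V : H →L[ℂ] H) : WithLp 2 (H × H) →L[ℂ] WithLp 2 (H × H) :=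
  blk (bogA D V) 0 0 (bogB D V)

/-- `T := (1/√2)[[1, i·1],[1, −i·1]]`. -/
noncomputable def Tblk : WithLp 2 (H × H) →L[ℂ] WithLp 2 (H × H) :=
  ((Real.sqrt 2 : ℂ))⁻¹ • blk 1 (Complex.I • 1) 1 (-(Complex.I • 1))

/-- `G := T S⁻¹ T*`. -/
noncomputable def Gop (D V : H →L[ℂ] H) : WithLp 2 (H × H) →L[ℂ] WithLp 2 (H × H) :=
  Tblk * Ring.inverse (Sblk D V) * ContinuousLinearMap.adjoint Tblk


section BdGAux

set_option linter.unusedSectionVars false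

lemma ring_inverse_eq {M₀ : Type*} [MonoidWithZero M₀] {a b : M₀}
    (h1 : a * b = 1) (h2 : b * a = 1) : Ring.inverse a = b :=
  Ring.inverse_unit ⟨a, b, h1, h2⟩

lemma isUnit_of_mul_self {M₀ : Type*} [Monoid M₀] {a : M₀}
    (h : IsUnit (a * a)) : IsUnit a := by
  obtain ⟨u, hu⟩ := h
  have hc : Commute a (u : M₀) := by
    rw [hu]; exact (Commute.refl a).mul_right (Commute.refl a)
  have hc' : Commute a ((u⁻¹ : M₀ˣ) : M₀) := hc.units_inv_right
  refine ⟨⟨a, (u⁻¹ : M₀ˣ) * a, ?_, ?_⟩, rfl⟩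
  · rw [← mul_assoc, hc'.eq, mul_assoc, ← hu, Units.inv_mul]
  · rw [mul_assoc, ← hu, Units.inv_mul]

@[simp] lemma blk_fst (P Q R S : H →L[ℂ] H) (x : WithLp 2 (H × H)) :
    (blk P Q R S x).fst = P x.fst + Q x.snd := rfl
@[simp] lemma blk_snd (P Q R S : H →L[ℂ] H) (x : WithLp 2 (H × H)) :
    (blk P Q R S x).snd = R x.fst + S x.snd := rfl

lemma wlp_ext {a b : WithLp 2 (H × H)} (h1 : a.fst = b.fst) (h2 : a.snd = b.snd) : a = b :=
  WithLp.ofLp_injective 2 (Prod.ext h1 h2)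

lemma blk_mul (P Q R S P' Q' R' S' : H →L[ℂ] H) :
    blk P Q R S * blk P' Q' R' S' =
      blk (P*P'+Q*R') (P*Q'+Q*S') (R*P'+S*R') (R*Q'+S*S') := by
  ext x
  all_goals apply wlp_ext <;>
    (simp [ContinuousLinearMap.mul_apply, map_add]; try abel)

lemma blk_one : blk (1:H →L[ℂ] H) 0 0 1 = 1 := by
  ext x; all_goals apply wlp_ext <;> simp

lemma blk_add (P Q R S P' Q' R' S' : H →L[ℂ] H) :
    blk P Q R S + blk P' Q' R' S' = blk (P+P') (Q+Q') (R+R') (S+S') := by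
  ext x; all_goals apply wlp_ext <;> (simp [ContinuousLinearMap.add_apply]; try abel)

lemma blk_smul (c : ℂ) (P Q R S : H →L[ℂ] H) :
    c • blk P Q R S = blk (c•P) (c•Q) (c•R) (c•S) := by
  ext x; all_goals apply wlp_ext <;> simp

lemma blk_neg (P Q R S : H →L[ℂ] H) :
    - blk P Q R S = blk (-P) (-Q) (-R) (-S) := by
  ext x; all_goals apply wlp_ext <;> (simp; try abel)

lemma blk_sub (P Q R S P' Q' R' S' : H →L[ℂ] H) :
    blk P Q R S - blk P' Q' R' S' = blk (P-P') (Q-Q') (R-R') (S-S') := by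
  rw [sub_eq_add_neg, blk_neg, blk_add]; simp [sub_eq_add_neg]

lemma blk_adjoint (P Q R S : H →L[ℂ] H) :
    ContinuousLinearMap.adjoint (blk P Q R S)
      = blk (ContinuousLinearMap.adjoint P) (ContinuousLinearMap.adjoint R)
          (ContinuousLinearMap.adjoint Q) (ContinuousLinearMap.adjoint S) := by
  symm
  rw [ContinuousLinearMap.eq_adjoint_iff]
  intro x y
  simp [WithLp.prod_inner_apply, ContinuousLinearMap.adjoint_inner_left, inner_add_left,
    inner_add_right]
  ring

open ContinuousLinearMap in
lemma isUnit_blk_diag_iff (P Q : H →L[ℂ] H) :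
    IsUnit (blk P 0 0 Q) ↔ IsUnit P ∧ IsUnit Q := by
  constructor
  · rintro ⟨u, hu⟩
    have hmul : ∀ x : WithLp 2 (H × H),
        (↑u : WithLp 2 (H × H) →L[ℂ] WithLp 2 (H × H))
          ((↑u⁻¹ : WithLp 2 (H × H) →L[ℂ] WithLp 2 (H × H)) x) = x := fun x => by
      exact DFunLike.congr_fun u.mul_inv x
    have hmul' : ∀ x : WithLp 2 (H × H),
        (↑u⁻¹ : WithLp 2 (H × H) →L[ℂ] WithLp 2 (H × H))
          ((↑u : WithLp 2 (H × H) →L[ℂ] WithLp 2 (H × H)) x) = x := fun x => by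
      exact DFunLike.congr_fun u.inv_mul x
    constructor
    · let W : WithLp 2 (H × H) →L[ℂ] WithLp 2 (H × H) :=
        (↑u⁻¹ : WithLp 2 (H × H) →L[ℂ] WithLp 2 (H × H))
      let emb : H →L[ℂ] WithLp 2 (H × H) :=
        ((WithLp.prodContinuousLinearEquiv 2 ℂ H H).symm.toContinuousLinearMap) ∘L
          (ContinuousLinearMap.inl ℂ H H)
      let pr : WithLp 2 (H × H) →L[ℂ] H :=
        (ContinuousLinearMap.fst ℂ H H) ∘L
          ((WithLp.prodContinuousLinearEquiv 2 ℂ H H).toContinuousLinearMap)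
      refine ⟨⟨P, pr ∘L W ∘L emb, ?_, ?_⟩, rfl⟩
      · ext x
        have h1 : (blk P 0 0 Q) (W (emb x)) = emb x := by rw [← hu]; exact hmul _
        have h2 : P (W (emb x)).fst = x := by
          have := congrArg WithLp.fst h1
          simpa [emb] using this
        simpa [pr, ContinuousLinearMap.mul_apply] using h2
      · ext x
        have h1 : W ((blk P 0 0 Q) (emb x)) = emb x := by rw [← hu]; exact hmul' _
        have h2 : (blk P 0 0 Q) (emb x) = emb (P x) := by
          apply wlp_ext <;> simp [emb]
        have h3 : (W (emb (P x))).fst = x := by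
          rw [← h2, h1]; rfl
        simpa [pr, ContinuousLinearMap.mul_apply] using h3
    · let W : WithLp 2 (H × H) →L[ℂ] WithLp 2 (H × H) :=
        (↑u⁻¹ : WithLp 2 (H × H) →L[ℂ] WithLp 2 (H × H))
      let emb : H →L[ℂ] WithLp 2 (H × H) :=
        ((WithLp.prodContinuousLinearEquiv 2 ℂ H H).symm.toContinuousLinearMap) ∘L
          (ContinuousLinearMap.inr ℂ H H)
      let pr : WithLp 2 (H × H) →L[ℂ] H :=
        (ContinuousLinearMap.snd ℂ H H) ∘L
          ((WithLp.prodContinuousLinearEquiv 2 ℂ H H).toContinuousLinearMap)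
      refine ⟨⟨Q, pr ∘L W ∘L emb, ?_, ?_⟩, rfl⟩
      · ext x
        have h1 : (blk P 0 0 Q) (W (emb x)) = emb x := by rw [← hu]; exact hmul _
        have h2 : Q (W (emb x)).snd = x := by
          have := congrArg WithLp.snd h1
          simpa [emb] using this
        simpa [pr, ContinuousLinearMap.mul_apply] using h2
      · ext x
        have h1 : W ((blk P 0 0 Q) (emb x)) = emb x := by rw [← hu]; exact hmul' _
        have h2 : (blk P 0 0 Q) (emb x) = emb (Q x) := by
          apply wlp_ext <;> simp [emb]
        have h3 : (W (emb (Q x))).snd = x := by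
          rw [← h2, h1]; rfl
        simpa [pr, ContinuousLinearMap.mul_apply] using h3
  · rintro ⟨⟨p, hp⟩, ⟨q, hq⟩⟩
    refine ⟨⟨blk P 0 0 Q, blk ↑p⁻¹ 0 0 ↑q⁻¹, ?_, ?_⟩, rfl⟩
    · rw [blk_mul]; simp [← hp, ← hq, ← blk_one]
    · rw [blk_mul]; simp [← hp, ← hq, ← blk_one]

lemma spectrum_blk_diag (P Q : H →L[ℂ] H) :
    spectrum ℂ (blk P 0 0 Q) = spectrum ℂ P ∪ spectrum ℂ Q := by
  ext z
  simp only [spectrum.mem_iff, Set.mem_union]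
  have halg : algebraMap ℂ (WithLp 2 (H × H) →L[ℂ] WithLp 2 (H × H)) z
      = blk (algebraMap ℂ _ z) 0 0 (algebraMap ℂ _ z) := by
    rw [Algebra.algebraMap_eq_smul_one, Algebra.algebraMap_eq_smul_one, ← blk_one, blk_smul]
    simp
  rw [halg, blk_sub]
  simp only [sub_zero]
  rw [isUnit_blk_diag_iff]
  tauto

lemma smul_one_nonneg (δ : ℝ) (hδ : 0 ≤ δ) : (0:H →L[ℂ] H) ≤ δ • 1 := by
  rw [ContinuousLinearMap.nonneg_iff_isPositive]
  constructor
  · exact ((IsSelfAdjoint.all δ).smul (IsSelfAdjoint.one (H →L[ℂ] H))).isSymmetric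
  · intro x
    have : (δ • (1:H →L[ℂ] H)).reApplyInnerSelf x = δ * ‖x‖^2 := by
      simp only [ContinuousLinearMap.reApplyInnerSelf, ContinuousLinearMap.smul_apply,
        ContinuousLinearMap.one_apply]
      rw [RCLike.real_smul_eq_coe_smul (K := ℂ), inner_smul_left]
      simp [Complex.conj_ofReal, Complex.mul_re, inner_self_eq_norm_sq, inner_self_im,
          ← Complex.ofReal_pow]
    rw [this]
    positivity

lemma blk_congr {P Q R S P' Q' R' S' : H →L[ℂ] H}
    (h1 : P = P') (h2 : Q = Q') (h3 : R = R') (h4 : S = S') :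
    blk P Q R S = blk P' Q' R' S' := by rw [h1, h2, h3, h4]

lemma bogE_eq (D V : H →L[ℂ] H) :
    bogE D V = CFC.sqrt (CFC.sqrt D * (D + (2 : ℝ) • V) * CFC.sqrt D) := rfl

lemma MBdG_eq (D V : H →L[ℂ] H) : MBdG D V = blk (D + V) V (-V) (-(D + V)) := rfl

lemma Sblk_eq (D V : H →L[ℂ] H) : Sblk D V = blk (bogA D V) 0 0 (bogB D V) := rfl

lemma Tblk_eq : (Tblk : WithLp 2 (H × H) →L[ℂ] WithLp 2 (H × H))
    = ((Real.sqrt 2 : ℂ))⁻¹ • blk 1 (Complex.I • 1) 1 (-(Complex.I • 1)) := rfl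

lemma Gop_eq (D V : H →L[ℂ] H) :
    Gop D V = Tblk * Ring.inverse (Sblk D V) * ContinuousLinearMap.adjoint Tblk := rfl

end BdGAux

theorem BdG_diagonalization
    (δ : ℝ) (hδ : 0 < δ) (D V : H →L[ℂ] H)
    (hD : IsSelfAdjoint D) (hDδ : δ • (1 : H →L[ℂ] H) ≤ D)
    (hV : 0 ≤ V) (hVtc : IsTraceClass V) :
    IsUnit (Gop D V) ∧
    Gop D V * MBdG D V * Ring.inverse (Gop D V) = blk (bogE D V) 0 0 (-(bogE D V)) ∧
    spectrum ℂ (MBdG D V)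
      = spectrum ℂ (bogE D V) ∪ (fun z => -z) '' spectrum ℂ (bogE D V) := by
  classical
  have hc2 : ((Real.sqrt 2 : ℂ))⁻¹ * ((Real.sqrt 2 : ℂ))⁻¹ = (2:ℂ)⁻¹ := by
    rw [← mul_inv, ← Complex.ofReal_mul, Real.mul_self_sqrt (by norm_num)]
    norm_num
  -- positivity and invertibility facts
  have h1 : (0:H →L[ℂ] H) ≤ δ • 1 := smul_one_nonneg δ hδ.le
  have h2 : IsUnit (δ • (1 : H →L[ℂ] H)) := by
    have hsm : δ • (1 : H →L[ℂ] H) = algebraMap ℂ (H →L[ℂ] H) δ := by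
      rw [Algebra.algebraMap_eq_smul_one]
      norm_num [Complex.coe_smul]
    rw [hsm]
    exact (isUnit_iff_ne_zero.mpr (by exact_mod_cast hδ.ne')).map (algebraMap ℂ (H →L[ℂ] H))
  have hDpos : (0:H →L[ℂ] H) ≤ D := h1.trans hDδ
  have hDunit : IsUnit D := CStarAlgebra.isUnit_of_le _ hDδ ⟨h1, h2⟩
  have h2V : (0:H →L[ℂ] H) ≤ (2:ℝ) • V := by rw [two_smul]; exact add_nonneg hV hV
  have hD2Vpos : (0:H →L[ℂ] H) ≤ D + (2:ℝ) • V := add_nonneg hDpos h2V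
  have hD2V : δ • (1 : H →L[ℂ] H) ≤ D + (2:ℝ) • V := hDδ.trans (le_add_of_nonneg_right h2V)
  have hD2Vunit : IsUnit (D + (2:ℝ) • V) := CStarAlgebra.isUnit_of_le _ hD2V ⟨h1, h2⟩
  set d : H →L[ℂ] H := CFC.sqrt D with hd_def
  have hdd : d * d = D := by rw [hd_def, ← pow_two]; exact CFC.sq_sqrt D hDpos
  have hdpos : (0:H →L[ℂ] H) ≤ d := CFC.sqrt_nonneg D
  have hdsa : IsSelfAdjoint d := hdpos.isSelfAdjoint
  have hdunit : IsUnit d := isUnit_of_mul_self (hdd ▸ hDunit)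
  set e : H →L[ℂ] H := bogE D V with he_def
  have hmidpos : (0:H →L[ℂ] H) ≤ d * (D + (2:ℝ) • V) * d := by
    have := star_left_conjugate_nonneg hD2Vpos d
    rwa [hdsa.star_eq] at this
  have hee : e * e = d * (D + (2:ℝ) • V) * d := by
    rw [he_def, bogE_eq, ← hd_def, ← pow_two]
    exact CFC.sq_sqrt _ hmidpos
  have hepos : (0:H →L[ℂ] H) ≤ e := by rw [he_def, bogE_eq]; exact CFC.sqrt_nonneg _
  have heunit : IsUnit e :=
    isUnit_of_mul_self (by rw [hee]; exact (hdunit.mul hD2Vunit).mul hdunit)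
  set s : H →L[ℂ] H := CFC.sqrt e with hs_def
  have hss : s * s = e := by rw [hs_def, ← pow_two]; exact CFC.sq_sqrt e hepos
  have hsunit : IsUnit s := isUnit_of_mul_self (hss ▸ heunit)
  set d' : H →L[ℂ] H := Ring.inverse d with hd'_def
  set s' : H →L[ℂ] H := Ring.inverse s with hs'_def
  have hdd' : d * d' = 1 := Ring.mul_inverse_cancel d hdunit
  have hd'd : d' * d = 1 := Ring.inverse_mul_cancel d hdunit
  have hss' : s * s' = 1 := Ring.mul_inverse_cancel s hsunit
  have hs's : s' * s = 1 := Ring.inverse_mul_cancel s hsunit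
  have hdd'X : ∀ X : H →L[ℂ] H, d * (d' * X) = X := fun X => by
    rw [← mul_assoc, hdd', one_mul]
  have hd'dX : ∀ X : H →L[ℂ] H, d' * (d * X) = X := fun X => by
    rw [← mul_assoc, hd'd, one_mul]
  have hss'X : ∀ X : H →L[ℂ] H, s * (s' * X) = X := fun X => by
    rw [← mul_assoc, hss', one_mul]
  have hs'sX : ∀ X : H →L[ℂ] H, s' * (s * X) = X := fun X => by
    rw [← mul_assoc, hs's, one_mul]
  have hA : bogA D V = d * s' := rfl
  have hB : bogB D V = d' * s := rfl
  -- the inverse of S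
  set Sinv : WithLp 2 (H × H) →L[ℂ] WithLp 2 (H × H) := blk (s * d') 0 0 (s' * d)
    with hSinv_def
  have hSS : Sblk D V * Sinv = 1 := by
    rw [Sblk_eq, hA, hB, hSinv_def, blk_mul]
    simp only [mul_zero, zero_mul, add_zero, zero_add]
    rw [show d * s' * (s * d') = 1 by rw [mul_assoc, hs'sX, hdd']]
    rw [show d' * s * (s' * d) = 1 by rw [mul_assoc, hss'X, hd'd]]
    exact blk_one
  have hSinvS : Sinv * Sblk D V = 1 := by
    rw [Sblk_eq, hA, hB, hSinv_def, blk_mul]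
    simp only [mul_zero, zero_mul, add_zero, zero_add]
    rw [show s * d' * (d * s') = 1 by rw [mul_assoc, hd'dX, hss']]
    rw [show s' * d * (d' * s) = 1 by rw [mul_assoc, hdd'X, hs's]]
    exact blk_one
  have hRingInvS : Ring.inverse (Sblk D V) = Sinv := ring_inverse_eq hSS hSinvS
  -- the adjoint of T and unitarity
  have hadj1 : ContinuousLinearMap.adjoint (1:H →L[ℂ] H) = 1 := by
    rw [← ContinuousLinearMap.star_eq_adjoint, star_one]
  have hadjI : ContinuousLinearMap.adjoint (Complex.I • (1:H →L[ℂ] H)) = -(Complex.I • 1) := by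
    rw [← ContinuousLinearMap.star_eq_adjoint, star_smul, star_one, Complex.star_def,
      Complex.conj_I, neg_smul]
  have hadjI' : ContinuousLinearMap.adjoint (-(Complex.I • (1:H →L[ℂ] H))) = Complex.I • 1 := by
    rw [← ContinuousLinearMap.star_eq_adjoint, star_neg, star_smul, star_one, Complex.star_def,
      Complex.conj_I, neg_smul, neg_neg]
  have hcstar : star (((Real.sqrt 2 : ℂ))⁻¹) = ((Real.sqrt 2 : ℂ))⁻¹ := by
    rw [star_inv₀, Complex.star_def, Complex.conj_ofReal]
  have hTstar : ContinuousLinearMap.adjoint (Tblk (H := H))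
      = ((Real.sqrt 2 : ℂ))⁻¹ • blk 1 1 (-(Complex.I • 1)) (Complex.I • 1) := by
    rw [← ContinuousLinearMap.star_eq_adjoint, Tblk_eq, star_smul,
      ContinuousLinearMap.star_eq_adjoint, blk_adjoint, hadj1, hadjI, hadjI', hcstar]
  have hTT : Tblk * ContinuousLinearMap.adjoint (Tblk (H := H)) = 1 := by
    rw [hTstar, Tblk_eq, smul_mul_smul_comm, hc2, blk_mul]
    rw [show (1:H →L[ℂ] H) * 1 + (Complex.I • 1) * (-(Complex.I • 1)) = (2:ℂ) • 1 by
      simp [smul_smul, Complex.I_mul_I, two_smul]]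
    rw [show (1:H →L[ℂ] H) * 1 + (Complex.I • 1) * (Complex.I • 1) = 0 by
      simp [smul_smul, Complex.I_mul_I]]
    rw [show (1:H →L[ℂ] H) * 1 + (-(Complex.I • 1)) * (-(Complex.I • 1)) = 0 by
      simp [smul_smul, Complex.I_mul_I]]
    rw [show (1:H →L[ℂ] H) * 1 + (-(Complex.I • 1)) * (Complex.I • 1) = (2:ℂ) • 1 by
      simp [smul_smul, Complex.I_mul_I, two_smul]]
    rw [show (0:H →L[ℂ] H) = (2:ℂ) • 0 by simp, ← blk_smul, smul_smul]
    norm_num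
    exact blk_one
  have hT'T : ContinuousLinearMap.adjoint (Tblk (H := H)) * Tblk = 1 := by
    rw [hTstar, Tblk_eq, smul_mul_smul_comm, hc2, blk_mul]
    rw [show (1:H →L[ℂ] H) * 1 + 1 * 1 = (2:ℂ) • 1 by simp [two_smul]]
    rw [show (1:H →L[ℂ] H) * (Complex.I • 1) + 1 * (-(Complex.I • 1)) = 0 by simp]
    rw [show (-(Complex.I • (1:H →L[ℂ] H))) * 1 + (Complex.I • 1) * 1 = 0 by simp]
    rw [show (-(Complex.I • (1:H →L[ℂ] H))) * (Complex.I • 1)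
        + (Complex.I • 1) * (-(Complex.I • 1)) = (2:ℂ) • 1 by
      simp [smul_smul, Complex.I_mul_I, two_smul]]
    rw [show (0:H →L[ℂ] H) = (2:ℂ) • 0 by simp, ← blk_smul, smul_smul]
    norm_num
    exact blk_one
  have hTT'X : ∀ X, ContinuousLinearMap.adjoint (Tblk (H := H)) * (Tblk * X) = X := fun X => by
    rw [← mul_assoc, hT'T, one_mul]
  have hSSX : ∀ X, Sblk D V * (Sinv * X) = X := fun X => by
    rw [← mul_assoc, hSS, one_mul]
  have hSinvSX : ∀ X, Sinv * (Sblk D V * X) = X := fun X => by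
    rw [← mul_assoc, hSinvS, one_mul]
  -- G is invertible
  set Ginv : WithLp 2 (H × H) →L[ℂ] WithLp 2 (H × H) :=
    Tblk * Sblk D V * ContinuousLinearMap.adjoint Tblk with hGinv_def
  have hGGinv : Gop D V * Ginv = 1 := by
    rw [Gop_eq, hRingInvS, hGinv_def]
    simp only [mul_assoc]
    rw [hTT'X, hSinvSX]
    exact hTT
  have hGinvG : Ginv * Gop D V = 1 := by
    rw [Gop_eq, hRingInvS, hGinv_def]
    simp only [mul_assoc]
    rw [hTT'X, hSSX]
    exact hTT
  have hGunit : IsUnit (Gop D V) := ⟨⟨Gop D V, Ginv, hGGinv, hGinvG⟩, rfl⟩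
  have hRingInvG : Ring.inverse (Gop D V) = Ginv := ring_inverse_eq hGGinv hGinvG
  -- the key conjugation computation
  have hMX : MBdG D V * blk 1 (Complex.I • 1) 1 (-(Complex.I • 1))
      = blk (D + (2:ℝ) • V) (Complex.I • D) (-(D + (2:ℝ) • V)) (Complex.I • D) := by
    rw [MBdG_eq, blk_mul]
    apply blk_congr <;>
    · simp only [mul_one, one_mul, mul_neg, neg_mul, neg_neg, mul_smul_comm]
      module
  have hTMT : ContinuousLinearMap.adjoint (Tblk (H := H)) * (MBdG D V * Tblk)
      = blk 0 (Complex.I • D) ((-Complex.I) • (D + (2:ℝ) • V)) 0 := by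
    rw [hTstar, Tblk_eq, mul_smul_comm, smul_mul_smul_comm, hc2, hMX, blk_mul, blk_smul]
    apply blk_congr <;>
    · simp only [one_mul, mul_one, neg_mul, mul_neg, smul_mul_assoc, mul_smul_comm]
      module
  have key1 : s * d' * (D * (d' * s)) = e := by
    rw [← hdd]
    simp only [mul_assoc]
    rw [hd'dX, hdd'X]
    exact hss
  have hconj : d * ((D + (2:ℝ) • V) * d) = e * e := by rw [hee, mul_assoc]
  have key2 : s' * d * ((D + (2:ℝ) • V) * (d * s')) = e := by
    calc s' * d * ((D + (2:ℝ) • V) * (d * s'))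
        = s' * (d * ((D + (2:ℝ) • V) * d) * s') := by simp only [mul_assoc]
      _ = s' * (e * e * s') := by rw [hconj]
      _ = e := by
          simp only [← hss, mul_assoc]
          rw [hs'sX, hss', mul_one]
  have hZS : blk 0 (Complex.I • D) ((-Complex.I) • (D + (2:ℝ) • V)) 0 * Sblk D V
      = blk 0 (Complex.I • (D * (d' * s))) ((-Complex.I) • ((D + (2:ℝ) • V) * (d * s'))) 0 := by
    rw [Sblk_eq, hA, hB, blk_mul]
    apply blk_congr <;>
      simp only [zero_mul, mul_zero, add_zero, zero_add, smul_mul_assoc]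
  have hSZS : Sinv * blk 0 (Complex.I • (D * (d' * s)))
      ((-Complex.I) • ((D + (2:ℝ) • V) * (d * s'))) 0
      = blk 0 (Complex.I • e) ((-Complex.I) • e) 0 := by
    rw [hSinv_def, blk_mul]
    apply blk_congr
    · simp
    · simp only [mul_zero, zero_mul, zero_add, add_zero, mul_smul_comm]
      rw [key1]
    · simp only [mul_zero, zero_mul, zero_add, add_zero, mul_smul_comm]
      rw [key2]
    · simp
  have hSand : Sinv * (blk 0 (Complex.I • D) ((-Complex.I) • (D + (2:ℝ) • V)) 0 * Sblk D V)
      = blk 0 (Complex.I • e) ((-Complex.I) • e) 0 := by rw [hZS, hSZS]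
  have hfinal : Tblk * (blk 0 (Complex.I • e) ((-Complex.I) • e) 0
      * ContinuousLinearMap.adjoint (Tblk (H := H))) = blk e 0 0 (-e) := by
    rw [hTstar, Tblk_eq, mul_smul_comm, smul_mul_smul_comm, hc2, blk_mul, blk_mul, blk_smul]
    apply blk_congr <;>
    · simp only [one_mul, mul_one, zero_mul, mul_zero, add_zero, zero_add, mul_neg, neg_mul,
        neg_neg, smul_mul_assoc, mul_smul_comm, smul_smul, Complex.I_mul_I, neg_smul, one_smul]
      match_scalars <;> simp [Complex.I_sq] <;> ring
  -- the ∀-versions for rewriting inside long products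
  have hTMT_X : ∀ X, ContinuousLinearMap.adjoint (Tblk (H := H)) * (MBdG D V * (Tblk * X))
      = blk 0 (Complex.I • D) ((-Complex.I) • (D + (2:ℝ) • V)) 0 * X := fun X => by
    have := congrArg (fun y => y * X) hTMT
    simpa only [mul_assoc] using this
  have hSand_X : ∀ X, Sinv * (blk 0 (Complex.I • D) ((-Complex.I) • (D + (2:ℝ) • V)) 0
      * (Sblk D V * X)) = blk 0 (Complex.I • e) ((-Complex.I) • e) 0 * X := fun X => by
    have := congrArg (fun y => y * X) hSand
    simpa only [mul_assoc] using this
  have hGoal : Gop D V * MBdG D V * Ring.inverse (Gop D V) = blk e 0 0 (-e) := by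
    rw [hRingInvG, Gop_eq, hRingInvS, hGinv_def]
    simp only [mul_assoc]
    have step1 := congrArg (fun y => Tblk * (Sinv * y))
      (hTMT_X (Sblk D V * ContinuousLinearMap.adjoint Tblk))
    have step2 := congrArg (fun y => Tblk * y) (hSand_X (ContinuousLinearMap.adjoint Tblk))
    exact step1.trans (step2.trans hfinal)
  refine ⟨hGunit, hGoal, ?_⟩
  -- the spectrum
  have hu : (hGunit.unit : WithLp 2 (H × H) →L[ℂ] WithLp 2 (H × H)) = Gop D V :=
    hGunit.unit_spec
  have hu' : ((hGunit.unit⁻¹ : _ˣ) : WithLp 2 (H × H) →L[ℂ] WithLp 2 (H × H))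
      = Ring.inverse (Gop D V) :=
    ((congrArg Ring.inverse hu.symm).trans (Ring.inverse_unit hGunit.unit)).symm
  calc spectrum ℂ (MBdG D V)
      = spectrum ℂ ((hGunit.unit : WithLp 2 (H × H) →L[ℂ] WithLp 2 (H × H)) * MBdG D V
          * ((hGunit.unit⁻¹ : _ˣ) : WithLp 2 (H × H) →L[ℂ] WithLp 2 (H × H))) :=
        (spectrum.units_conjugate).symm
    _ = spectrum ℂ (blk e 0 0 (-e)) := by rw [hu, hu', hGoal]
    _ = spectrum ℂ e ∪ spectrum ℂ (-e) := spectrum_blk_diag e (-e)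
    _ = spectrum ℂ e ∪ (fun z => -z) '' spectrum ℂ e := by
        congr 1
        rw [← spectrum.neg_eq]
        ext z
        simp only [Set.mem_image, Set.mem_neg]
        constructor
        · intro h
          exact ⟨-z, h, neg_neg z⟩
        · rintro ⟨x, hx, rfl⟩
          simpa using hx
end
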